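/- Fix λ > 0 and y > 0. For all t with 0 < t < y, the integral ∫_{-1}^{1} χ_λ(ρ,t) dρ satisfies 1/2 ≤ ∫_{-1}^{1} χ_λ(ρ,t) dρ ≤ 2, where χ_λ(ρ,t) = (λt/(e^{λt} - e^{-λt})) · ((e^{λy} + e^{-λy})/(e^{λ(y-ρt)} + e^{-λ(y-ρt)})). -/

import Mathlib

/-- Lemma 2(b): `1/2 ≤ ∫_{-1}^1 χ_λ(ρ,t) dρ ≤ 2`. -/
theorem chi_integral_bounds (lam y : ℝ) (hlam : 0 < lam) (hy : 0 < y)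
    (t : ℝ) (ht₀ : 0 < t) (hty : t < y) :
    (1 / 2 : ℝ) ≤
      (∫ ρ in (-1 : ℝ)..1,
        (lam * t / (Real.exp (lam * t) - Real.exp (-(lam * t)))) *
          ((Real.exp (lam * y) + Real.exp (-(lam * y))) /
            (Real.exp (lam * (y - ρ * t)) + Real.exp (-(lam * (y - ρ * t)))))) ∧
      (∫ ρ in (-1 : ℝ)..1,
        (lam * t / (Real.exp (lam * t) - Real.exp (-(lam * t)))) *
          ((Real.exp (lam * y) + Real.exp (-(lam * y))) /
            (Real.exp (lam * (y - ρ * t)) + Real.exp (-(lam * (y - ρ * t)))))) ≤ 2 := by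
  have hs0 : 0 < lam * t := mul_pos hlam ht₀
  have hexp : Real.exp (-(lam * t)) < Real.exp (lam * t) := Real.exp_lt_exp.2 (by linarith)
  set C := lam * t / (Real.exp (lam * t) - Real.exp (-(lam * t))) with hCdef
  have hC0 : 0 < C := div_pos hs0 (by linarith)
  -- exact value of ∫ exp(lam * ρ * t)
  have hderiv : ∀ ρ : ℝ, HasDerivAt (fun ρ => Real.exp (lam * ρ * t) / (lam * t))
      (Real.exp (lam * ρ * t)) ρ := by
    intro ρ
    have h1 : HasDerivAt (fun ρ : ℝ => lam * ρ * t) (lam * t) ρ := by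
      simpa using ((hasDerivAt_id ρ).const_mul lam).mul_const t
    have h2 := (h1.exp).div_const (lam * t)
    rwa [mul_div_cancel_right₀ _ hs0.ne'] at h2
  have hJ : (∫ ρ in (-1 : ℝ)..1, Real.exp (lam * ρ * t))
      = (Real.exp (lam * t) - Real.exp (-(lam * t))) / (lam * t) := by
    rw [intervalIntegral.integral_eq_sub_of_hasDerivAt (fun ρ _ => hderiv ρ)
      (Continuous.intervalIntegrable (by continuity) _ _)]
    have e1 : lam * 1 * t = lam * t := by ring
    have e2 : lam * (-1) * t = -(lam * t) := by ring
    rw [e1, e2]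
    ring
  -- continuity / integrability of the integrand
  have hcont : Continuous (fun ρ : ℝ =>
      C * ((Real.exp (lam * y) + Real.exp (-(lam * y))) /
        (Real.exp (lam * (y - ρ * t)) + Real.exp (-(lam * (y - ρ * t)))))) := by
    apply Continuous.mul continuous_const
    apply Continuous.div continuous_const
    · continuity
    · intro x; positivity
  have hint : IntervalIntegrable (fun ρ : ℝ =>
      C * ((Real.exp (lam * y) + Real.exp (-(lam * y))) /
        (Real.exp (lam * (y - ρ * t)) + Real.exp (-(lam * (y - ρ * t)))))) MeasureTheory.volume (-1) 1 :=
    hcont.intervalIntegrable _ _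
  have hintlo : IntervalIntegrable (fun ρ : ℝ => C / 2 * Real.exp (lam * ρ * t))
      MeasureTheory.volume (-1) 1 := (Continuous.intervalIntegrable (by continuity) _ _)
  have hinthi : IntervalIntegrable (fun ρ : ℝ => C * 2 * Real.exp (lam * ρ * t))
      MeasureTheory.volume (-1) 1 := (Continuous.intervalIntegrable (by continuity) _ _)
  -- pointwise bounds
  have hpt : ∀ ρ ∈ Set.Icc (-1 : ℝ) 1,
      C / 2 * Real.exp (lam * ρ * t) ≤
        C * ((Real.exp (lam * y) + Real.exp (-(lam * y))) /
          (Real.exp (lam * (y - ρ * t)) + Real.exp (-(lam * (y - ρ * t))))) ∧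
      C * ((Real.exp (lam * y) + Real.exp (-(lam * y))) /
          (Real.exp (lam * (y - ρ * t)) + Real.exp (-(lam * (y - ρ * t))))) ≤
        C * 2 * Real.exp (lam * ρ * t) := by
    intro ρ hρ
    obtain ⟨hρ1, hρ2⟩ := hρ
    have hbt : ρ * t ≤ t := by nlinarith
    have hb0 : 0 ≤ lam * (y - ρ * t) := by nlinarith
    set b := lam * (y - ρ * t) with hbdef
    have hEb : (0:ℝ) < Real.exp b := Real.exp_pos _
    have hDpos : 0 < Real.exp b + Real.exp (-b) := by positivity
    have hDle : Real.exp b + Real.exp (-b) ≤ 2 * Real.exp b := by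
      have := Real.exp_le_exp.2 (neg_le_self hb0)
      linarith
    have hDge : Real.exp b ≤ Real.exp b + Real.exp (-b) :=
      le_add_of_nonneg_right (Real.exp_pos _).le
    have hNge : Real.exp (lam * y) ≤ Real.exp (lam * y) + Real.exp (-(lam * y)) :=
      le_add_of_nonneg_right (Real.exp_pos _).le
    have hNle : Real.exp (lam * y) + Real.exp (-(lam * y)) ≤ 2 * Real.exp (lam * y) := by
      have : Real.exp (-(lam * y)) ≤ Real.exp (lam * y) :=
        Real.exp_le_exp.2 (by nlinarith)
      linarith
    have hEq : Real.exp (lam * y) / Real.exp b = Real.exp (lam * ρ * t) := by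
      rw [← Real.exp_sub]
      congr 1
      rw [hbdef]; ring
    constructor
    · have h := div_le_div₀ (by positivity) hNge hDpos hDle
      have h2 := mul_le_mul_of_nonneg_left h hC0.le
      calc C / 2 * Real.exp (lam * ρ * t)
          = C * (Real.exp (lam * y) / (2 * Real.exp b)) := by
            rw [show Real.exp (lam * y) / (2 * Real.exp b)
                = Real.exp (lam * y) / Real.exp b / 2 by ring, hEq]; ring
        _ ≤ _ := h2
    · have h := div_le_div₀ (by positivity) hNle hEb hDge
      have h2 := mul_le_mul_of_nonneg_left h hC0.le
      calc C * ((Real.exp (lam * y) + Real.exp (-(lam * y))) /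
            (Real.exp b + Real.exp (-b))) ≤
          C * (2 * Real.exp (lam * y) / Real.exp b) := h2
        _ = C * 2 * Real.exp (lam * ρ * t) := by
            rw [show 2 * Real.exp (lam * y) / Real.exp b
                = 2 * (Real.exp (lam * y) / Real.exp b) by ring, hEq]; ring
  have hlo := intervalIntegral.integral_mono_on (by norm_num : (-1:ℝ) ≤ 1)
    hintlo hint (fun ρ hρ => (hpt ρ hρ).1)
  have hhi := intervalIntegral.integral_mono_on (by norm_num : (-1:ℝ) ≤ 1)
    hint hinthi (fun ρ hρ => (hpt ρ hρ).2)
  have hone : C * ((Real.exp (lam * t) - Real.exp (-(lam * t))) / (lam * t)) = 1 := by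
    rw [hCdef, div_mul_div_comm, div_eq_one_iff_eq
      (mul_ne_zero (by linarith) (ne_of_gt hs0))]
    ring
  have hlo' : (∫ ρ in (-1:ℝ)..1, C / 2 * Real.exp (lam * ρ * t)) = 1 / 2 := by
    rw [intervalIntegral.integral_const_mul, hJ, div_mul_eq_mul_div, hone]
  have hhi' : (∫ ρ in (-1:ℝ)..1, C * 2 * Real.exp (lam * ρ * t)) = 2 := by
    rw [intervalIntegral.integral_const_mul, hJ, mul_right_comm, hone, one_mul]
  rw [hlo'] at hlo
  rw [hhi'] at hhi
  exact ⟨hlo, hhi⟩
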